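/- Let U : ℤ × ℕ → ℝ be defined on a grid with spacings dx, dt > 0, α = dt/dx² ≤ 1/2. Suppose |U(x, n) - U(y, n)| ≤ L̄·|x - y|·dx for all x, y, n with n·dt ≤ t̄, and |f(U(x, n))| ≤ A whenever n·dt ≤ t̄, where U satisfies U(x, n+1) = α·U(x+1, n) + (1-2α)·U(x, n) + α·U(x-1, n) + dt·f(U(x, n)). Then for all grid times t₀ = n₀·dt ≤ t₁ = n₁·dt ≤ t̄ and all x₀, |U(x₀, n₁) - U(x₀, n₀)| ≤ ((A+1)·√t̄ + 2·L̄)·√(t₁ - t₀). -/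

import Mathlib

lemma aux_barrier (dx dt α Lbar A tbar b : ℝ) (hdx : 0 < dx) (hdt : 0 < dt)
    (hαdef : α = dt / dx^2) (hα : α ≤ 1/2) (hL : 0 ≤ Lbar) (hA : 0 ≤ A)
    (hb : 0 < b)
    (f : ℝ → ℝ) (U : ℤ × ℕ → ℝ)
    (hrec : ∀ (x : ℤ) (n : ℕ),
      U (x, n+1) = α * U (x+1, n) + (1 - 2*α) * U (x, n) + α * U (x-1, n) + dt * f (U (x, n)))
    (hLip : ∀ (x y : ℤ) (n : ℕ), (n : ℝ) * dt ≤ tbar →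
      |U (x, n) - U (y, n)| ≤ Lbar * |(x : ℝ) - (y : ℝ)| * dx)
    (hfA : ∀ (x : ℤ) (n : ℕ), (n : ℝ) * dt ≤ tbar → |f (U (x, n))| ≤ A)
    (x₀ : ℤ) (n₀ n₁ : ℕ) (hn : n₀ ≤ n₁) (ht : (n₁ : ℝ) * dt ≤ tbar) :
    U (x₀, n₁) - U (x₀, n₀) ≤ (b + A) * ((n₁ : ℝ) * dt - (n₀ : ℝ) * dt) + Lbar^2/(2*b) := by
  have hα0 : 0 < α := by rw [hαdef]; positivity
  have hαdx : α * dx^2 = dt := by rw [hαdef]; field_simp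
  have hn₀t : (n₀ : ℝ) * dt ≤ tbar := by
    have h1 : (n₀ : ℝ) ≤ n₁ := by exact_mod_cast hn
    nlinarith
  have claim : ∀ k : ℕ, n₀ + k ≤ n₁ → ∀ x : ℤ,
      U (x, n₀ + k) ≤ U (x₀, n₀) + (b + A) * (k * dt)
        + b/2 * ((x : ℝ) - (x₀ : ℝ))^2 * dx^2 + Lbar^2/(2*b) := by
    intro k
    induction k with
    | zero =>
      intro _ x
      simp only [Nat.add_zero, Nat.cast_zero]
      have hl := le_of_abs_le (hLip x x₀ n₀ hn₀t)
      have h2b : (0:ℝ) < 2*b := by linarith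
      have hc : Lbar^2/(2*b)*(2*b) = Lbar^2 := div_mul_cancel₀ _ h2b.ne'
      have habs : |(x:ℝ) - (x₀:ℝ)|^2 = ((x:ℝ) - (x₀:ℝ))^2 := sq_abs _
      have hnn : 0 ≤ |(x:ℝ) - (x₀:ℝ)| := abs_nonneg _
      have e : b/2*((x:ℝ)-(x₀:ℝ))^2*dx^2 + Lbar^2/(2*b) - Lbar*(|(x:ℝ)-(x₀:ℝ)| * dx)
          = (b*(|(x:ℝ)-(x₀:ℝ)| * dx) - Lbar)^2 / (2*b) := by
        field_simp
        linear_combination (-(b^2*dx^2)) * habs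
      have hd := div_nonneg (sq_nonneg (b*(|(x:ℝ)-(x₀:ℝ)| * dx) - Lbar)) h2b.le
      linarith [hl, e.ge, e.le, hd]
    | succ k ih =>
      intro hk x
      have hk' : n₀ + k ≤ n₁ := by omega
      have htk : ((n₀ + k : ℕ) : ℝ) * dt ≤ tbar := by
        have h1 : ((n₀ + k : ℕ) : ℝ) ≤ (n₁ : ℝ) := by exact_mod_cast hk'
        nlinarith
      have ihp := ih hk' (x+1)
      have ih0 := ih hk' x
      have ihm := ih hk' (x-1)
      push_cast at ihp ihm
      have hf : f (U (x, n₀ + k)) ≤ A := le_of_abs_le (hfA x (n₀ + k) htk)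
      have h1 := mul_le_mul_of_nonneg_left ihp hα0.le
      have h2 := mul_le_mul_of_nonneg_left ih0 (by linarith : (0:ℝ) ≤ 1 - 2*α)
      have h3 := mul_le_mul_of_nonneg_left ihm hα0.le
      have h4 := mul_le_mul_of_nonneg_left hf hdt.le
      have hrec'' : U (x, n₀ + (k+1)) = α * U (x+1, n₀+k) + (1 - 2*α) * U (x, n₀+k)
          + α * U (x-1, n₀+k) + dt * f (U (x, n₀+k)) := hrec x (n₀ + k)
      have step : α * (U (x₀,n₀) + (b+A)*((k:ℝ)*dt) + b/2*((x:ℝ)+1-(x₀:ℝ))^2*dx^2 + Lbar^2/(2*b))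
          + (1-2*α) * (U (x₀,n₀) + (b+A)*((k:ℝ)*dt) + b/2*((x:ℝ)-(x₀:ℝ))^2*dx^2 + Lbar^2/(2*b))
          + α * (U (x₀,n₀) + (b+A)*((k:ℝ)*dt) + b/2*((x:ℝ)-1-(x₀:ℝ))^2*dx^2 + Lbar^2/(2*b))
          + dt * A
          = U (x₀,n₀) + (b+A)*(((k:ℝ)+1)*dt) + b/2*((x:ℝ)-(x₀:ℝ))^2*dx^2 + Lbar^2/(2*b) := by
        linear_combination b * hαdx
      rw [hrec'']
      push_cast
      linarith [h1, h2, h3, h4, step]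
  have hfin := claim (n₁ - n₀) (by omega) x₀
  rw [Nat.add_sub_cancel' hn] at hfin
  have hcast : ((n₁ - n₀ : ℕ) : ℝ) = (n₁ : ℝ) - (n₀ : ℝ) := by
    push_cast [Nat.cast_sub hn]; ring
  rw [hcast] at hfin
  nlinarith [hfin]

theorem stmt_7 (dx dt α Lbar A tbar : ℝ) (hdx : 0 < dx) (hdt : 0 < dt)
    (hαdef : α = dt / dx^2) (hα : α ≤ 1/2) (hL : 0 ≤ Lbar) (hA : 0 ≤ A) (htbar : 0 < tbar)
    (f : ℝ → ℝ) (U : ℤ × ℕ → ℝ)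
    (hrec : ∀ (x : ℤ) (n : ℕ),
      U (x, n+1) = α * U (x+1, n) + (1 - 2*α) * U (x, n) + α * U (x-1, n) + dt * f (U (x, n)))
    (hLip : ∀ (x y : ℤ) (n : ℕ), (n : ℝ) * dt ≤ tbar →
      |U (x, n) - U (y, n)| ≤ Lbar * |(x : ℝ) - (y : ℝ)| * dx)
    (hfA : ∀ (x : ℤ) (n : ℕ), (n : ℝ) * dt ≤ tbar → |f (U (x, n))| ≤ A) :
    ∀ (x₀ : ℤ) (n₀ n₁ : ℕ), n₀ ≤ n₁ → (n₁ : ℝ) * dt ≤ tbar →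
      |U (x₀, n₁) - U (x₀, n₀)| ≤
        ((A + 1) * Real.sqrt tbar + 2 * Lbar) * Real.sqrt ((n₁ : ℝ) * dt - (n₀ : ℝ) * dt) := by
  intro x₀ n₀ n₁ hn ht
  -- negated solution data
  have hrecV : ∀ (x : ℤ) (n : ℕ),
      (fun p => -U p) (x, n+1) = α * (fun p => -U p) (x+1, n) + (1 - 2*α) * (fun p => -U p) (x, n)
        + α * (fun p => -U p) (x-1, n) + dt * (fun y => -f (-y)) ((fun p => -U p) (x, n)) := by
    intro x n
    show -U (x, n+1) = α * -U (x+1, n) + (1 - 2*α) * -U (x, n) + α * -U (x-1, n)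
      + dt * -f (-(-U (x, n)))
    rw [neg_neg, hrec x n]; ring
  have hLipV : ∀ (x y : ℤ) (n : ℕ), (n : ℝ) * dt ≤ tbar →
      |(fun p => -U p) (x, n) - (fun p => -U p) (y, n)| ≤ Lbar * |(x : ℝ) - (y : ℝ)| * dx := by
    intro x y n h
    show |-U (x, n) - -U (y, n)| ≤ _
    rw [show -U (x, n) - -U (y, n) = -(U (x, n) - U (y, n)) by ring, abs_neg]
    exact hLip x y n h
  have hfAV : ∀ (x : ℤ) (n : ℕ), (n : ℝ) * dt ≤ tbar →
      |(fun y => -f (-y)) ((fun p => -U p) (x, n))| ≤ A := by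
    intro x n h
    show |-f (-(-U (x, n)))| ≤ A
    rw [neg_neg, abs_neg]
    exact hfA x n h
  have key : ∀ b : ℝ, 0 < b → |U (x₀, n₁) - U (x₀, n₀)| ≤
      (b + A) * ((n₁ : ℝ) * dt - (n₀ : ℝ) * dt) + Lbar^2/(2*b) := by
    intro b hb
    have h1 := aux_barrier dx dt α Lbar A tbar b hdx hdt hαdef hα hL hA hb f U
      hrec hLip hfA x₀ n₀ n₁ hn ht
    have h2' := aux_barrier dx dt α Lbar A tbar b hdx hdt hαdef hα hL hA hb
      (fun y => -f (-y)) (fun p => -U p) hrecV hLipV hfAV x₀ n₀ n₁ hn ht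
    have h2 : (-U (x₀, n₁)) - (-U (x₀, n₀)) ≤
        (b + A) * ((n₁ : ℝ) * dt - (n₀ : ℝ) * dt) + Lbar^2/(2*b) := h2'
    rw [abs_le]
    constructor <;> linarith
  have hΔ0 : (0:ℝ) ≤ (n₁ : ℝ) * dt - (n₀ : ℝ) * dt := by
    have h1 : (n₀ : ℝ) ≤ n₁ := by exact_mod_cast hn
    nlinarith
  have hΔt : (n₁ : ℝ) * dt - (n₀ : ℝ) * dt ≤ tbar := by
    have h0 : (0:ℝ) ≤ (n₀ : ℝ) * dt := by positivity
    linarith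
  obtain ⟨Δ, hΔdef⟩ : ∃ Δ, Δ = (n₁ : ℝ) * dt - (n₀ : ℝ) * dt := ⟨_, rfl⟩
  rw [← hΔdef] at key hΔ0 hΔt ⊢
  rcases eq_or_lt_of_le hΔ0 with hΔe | hΔp
  · have h : (n₁ : ℝ) * dt = (n₀ : ℝ) * dt := by rw [hΔdef] at hΔe; linarith
    have h' : (n₁ : ℝ) = (n₀ : ℝ) := mul_right_cancel₀ hdt.ne' h
    have hnn : n₁ = n₀ := by exact_mod_cast h'
    subst hnn
    simp [← hΔe]
  · have hs : 0 < Real.sqrt Δ := Real.sqrt_pos.mpr hΔp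
    have hss : Real.sqrt Δ * Real.sqrt Δ = Δ := Real.mul_self_sqrt hΔ0
    have hstb : Real.sqrt Δ ≤ Real.sqrt tbar := Real.sqrt_le_sqrt hΔt
    have htb0 : 0 ≤ Real.sqrt tbar := Real.sqrt_nonneg _
    have hAs : A * Δ ≤ A * Real.sqrt tbar * Real.sqrt Δ := by
      nlinarith [mul_le_mul_of_nonneg_right (mul_le_mul_of_nonneg_left hstb hA) hs.le, hss]
    rcases eq_or_lt_of_le hL with hL0 | hLp
    · have h2 : |U (x₀, n₁) - U (x₀, n₀)| ≤ A * Δ := by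
        by_contra hcon
        push_neg at hcon
        have hε : 0 < (|U (x₀, n₁) - U (x₀, n₀)| - A * Δ) / 2 := by linarith
        have h := key (((|U (x₀, n₁) - U (x₀, n₀)| - A * Δ) / 2) / Δ) (div_pos hε hΔp)
        have e : ((((|U (x₀, n₁) - U (x₀, n₀)| - A * Δ) / 2) / Δ) + A) * Δ
            = (|U (x₀, n₁) - U (x₀, n₀)| - A * Δ) / 2 + A * Δ := by
          field_simp
        rw [← hL0] at h
        norm_num at h
        linarith
      rw [← hL0]
      have hts : 0 ≤ Real.sqrt tbar * Real.sqrt Δ := mul_nonneg htb0 hs.le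
      nlinarith [h2, hAs, hts]
    · have h := key (Lbar / Real.sqrt Δ) (div_pos hLp hs)
      have e1 : (Lbar / Real.sqrt Δ + A) * Δ = Lbar * Real.sqrt Δ + A * Δ := by
        field_simp
        linear_combination (-Lbar) * Real.sq_sqrt hΔ0
      have e2 : Lbar^2 / (2 * (Lbar / Real.sqrt Δ)) = Lbar * Real.sqrt Δ / 2 := by
        field_simp
      have hLs : 0 ≤ Lbar * Real.sqrt Δ := mul_nonneg hLp.le hs.le
      have hts : 0 ≤ Real.sqrt tbar * Real.sqrt Δ := mul_nonneg htb0 hs.le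
      nlinarith [h, e1, e2, hAs, hLs, hts]
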